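/- For the pentagon sides s₁,…,s₅ defined by s₁ = (−quv+pu+pv+q)(puv+qu+qv−p)/q², s₂ = (u²+1)(qv−p)(pv+q)/q², s₃ = mn(u²+1)(v²+1)(p²+q²)/(q²(m²+n²)), s₄ = (u²+1)(v²+1)(mq+np)(mp−nq)/(q²(m²+n²)), s₅ = (v²+1)(qu−p)(pu+q)/q², and the diagonal e = p(u²+1)(v²+1)/q (length of CE), the triangle with sides s₃, s₄, e has circumradius R = (u²+1)(v²+1)(p²+q²)/(4q²): (s₃·s₄·e)² = R²(s₃+s₄+e)(s₃+s₄−e)(s₄+e−s₃)(e+s₃−s₄). -/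

import Mathlib

set_option maxHeartbeats 1000000

private lemma pentagon_key (m n p q a : ℚ)
    (hq : q ≠ 0) (hmn : m^2 + n^2 ≠ 0) :
    (m * n * a * (p^2 + q^2) / (q^2 * (m^2 + n^2)) *
        (a * (m * q + n * p) * (m * p - n * q) / (q^2 * (m^2 + n^2))) *
        (p * a / q))^2 =
      (a * (p^2 + q^2) / (4 * q^2))^2 *
        ((m * n * a * (p^2 + q^2) / (q^2 * (m^2 + n^2)) +
            a * (m * q + n * p) * (m * p - n * q) / (q^2 * (m^2 + n^2)) +
            p * a / q) *
          (m * n * a * (p^2 + q^2) / (q^2 * (m^2 + n^2)) +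
            a * (m * q + n * p) * (m * p - n * q) / (q^2 * (m^2 + n^2)) -
            p * a / q) *
          (a * (m * q + n * p) * (m * p - n * q) / (q^2 * (m^2 + n^2)) +
            p * a / q -
            m * n * a * (p^2 + q^2) / (q^2 * (m^2 + n^2))) *
          (p * a / q + m * n * a * (p^2 + q^2) / (q^2 * (m^2 + n^2)) -
            a * (m * q + n * p) * (m * p - n * q) / (q^2 * (m^2 + n^2)))) := by
  field_simp
  ring

theorem pentagon_triangle_CDE_circumradius (m n p q u v s3 s4 e R : ℚ)
    (hq : q ≠ 0) (hmn : m^2 + n^2 ≠ 0) (hmnpq : m * n * p * q ≠ 0)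
    (hs3 : s3 = m * n * (u^2 + 1) * (v^2 + 1) * (p^2 + q^2) /
      (q^2 * (m^2 + n^2)))
    (hs4 : s4 = (u^2 + 1) * (v^2 + 1) * (m * q + n * p) * (m * p - n * q) /
      (q^2 * (m^2 + n^2)))
    (he : e = p * (u^2 + 1) * (v^2 + 1) / q)
    (hR : R = (u^2 + 1) * (v^2 + 1) * (p^2 + q^2) / (4 * q^2)) :
    (s3 * s4 * e)^2 =
      R^2 * ((s3 + s4 + e) * (s3 + s4 - e) * (s4 + e - s3) * (e + s3 - s4)) := by
  have h := pentagon_key m n p q ((u^2 + 1) * (v^2 + 1)) hq hmn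
  subst hs3 hs4 he hR
  convert h using 2 <;> ring
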